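/- Let k ∈ ℕ with k ≥ 1. (i) There exists a constant C > 0 such that |∂_a^k g(r,a,t)| ≤ C r^{2k} e^{−tr²} Σ_{j=1}^{k} (tr²)^j for all 0 ≤ r ≤ 1/3, all 0 ≤ a ≤ 1 and all t > 0. (ii) There exist constants c_1, …, c_k such that ∂_a^k g(r,a,t) evaluated at a = 0 equals r^{2k} e^{−tr²} Σ_{j=1}^{k} c_j (tr²)^j for all r ≥ 0 and all t > 0. The constants C and c_1, …, c_k are independent of r, a and t. -/

import Mathlib

open Real Finset

section Stmt13Aux

variable {r t a : ℝ}

lemma u_pos13 (ha : 4 * a * r ^ 2 < 1) : 0 < 1 - 4 * a * r ^ 2 := by linarith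

lemma s_pos13 (ha : 4 * a * r ^ 2 < 1) : 0 < Real.sqrt (1 - 4 * a * r ^ 2) :=
  Real.sqrt_pos.mpr (u_pos13 ha)

lemma hasDerivAt_s13 (ha : 4 * a * r ^ 2 < 1) :
    HasDerivAt (fun a' : ℝ => Real.sqrt (1 - 4 * a' * r ^ 2))
      (-(2 * r ^ 2) * (Real.sqrt (1 - 4 * a * r ^ 2))⁻¹) a := by
  have h1 : HasDerivAt (fun a' : ℝ => 1 - 4 * a' * r ^ 2) (-(4 * r ^ 2)) a := by
    have := ((hasDerivAt_id a).const_mul (4 : ℝ)).mul_const (r ^ 2)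
    have h2 := (hasDerivAt_const a (1:ℝ)).sub this
    exact h2.congr_deriv (by ring)
  have h2 := h1.sqrt (ne_of_gt (u_pos13 ha))
  convert h2 using 1
  have hs := s_pos13 ha
  field_simp
  ring

lemma hasDerivAt_y13 (ha : 4 * a * r ^ 2 < 1) :
    HasDerivAt (fun a' : ℝ => (Real.sqrt (1 - 4 * a' * r ^ 2))⁻¹)
      (2 * r ^ 2 * ((Real.sqrt (1 - 4 * a * r ^ 2))⁻¹) ^ 3) a := by
  have hs := s_pos13 ha
  have h := (hasDerivAt_s13 ha).inv (ne_of_gt hs)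
  refine h.congr_deriv ?_
  rw [neg_mul, neg_neg, div_eq_mul_inv, ← inv_pow]
  ring

lemma hasDerivAt_z13 (ha : 4 * a * r ^ 2 < 1) :
    HasDerivAt (fun a' : ℝ => (1 + Real.sqrt (1 - 4 * a' * r ^ 2))⁻¹)
      (2 * r ^ 2 * (Real.sqrt (1 - 4 * a * r ^ 2))⁻¹
        * ((1 + Real.sqrt (1 - 4 * a * r ^ 2))⁻¹) ^ 2) a := by
  have hs := s_pos13 ha
  have h1s : (0:ℝ) < 1 + Real.sqrt (1 - 4 * a * r ^ 2) := by positivity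
  have h := ((hasDerivAt_const a (1:ℝ)).fun_add (hasDerivAt_s13 ha)).inv (ne_of_gt h1s)
  refine h.congr_deriv ?_
  rw [div_eq_mul_inv, ← inv_pow]
  ring

lemma hasDerivAt_g13 (ha : 4 * a * r ^ 2 < 1) :
    HasDerivAt (fun a' : ℝ => Real.exp (-(2 * t * r ^ 2) / (1 + Real.sqrt (1 - 4 * a' * r ^ 2))))
      (Real.exp (-(2 * t * r ^ 2) / (1 + Real.sqrt (1 - 4 * a * r ^ 2))) *
        (-(4 * t * r ^ 2 * r ^ 2) * (Real.sqrt (1 - 4 * a * r ^ 2))⁻¹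
          * ((1 + Real.sqrt (1 - 4 * a * r ^ 2))⁻¹) ^ 2)) a := by
  have h := ((hasDerivAt_z13 ha).const_mul (-(2 * t * r ^ 2))).exp
  have hfun : (fun a' : ℝ => Real.exp (-(2 * t * r ^ 2) * (1 + Real.sqrt (1 - 4 * a' * r ^ 2))⁻¹))
      = (fun a' : ℝ => Real.exp (-(2 * t * r ^ 2) / (1 + Real.sqrt (1 - 4 * a' * r ^ 2)))) := by
    funext x; rw [div_eq_mul_inv]
  rw [hfun] at h
  convert h using 1
  rw [div_eq_mul_inv]
  ring


lemma pow_aux13 (x : ℝ) (j : ℕ) : (j:ℝ) * x ^ (j-1) * x ^ 3 = (j:ℝ) * x ^ (j+2) := by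
  cases j with
  | zero => simp
  | succ m => simp only [Nat.succ_sub_one]; push_cast; ring

lemma pow_aux13' (x y : ℝ) (l : ℕ) : (l:ℝ) * x ^ (l-1) * (y * x ^ 2) = (l:ℝ) * y * x ^ (l+1) := by
  cases l with
  | zero => simp
  | succ m => simp only [Nat.succ_sub_one]; push_cast; ring

lemma sum_three13 {M : Type*} [AddCommMonoid M] (n : ℕ) (F : ℕ → M) :
    ∑ m ∈ Finset.range (3*n), F m
      = ∑ m ∈ Finset.range n, F m + ∑ m ∈ Finset.range n, F (n+m)
        + ∑ m ∈ Finset.range n, F (2*n+m) := by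
  rw [range_eq_Ico, ← Finset.sum_Ico_consecutive F (Nat.zero_le n) (by omega : n ≤ 3*n),
    ← Finset.sum_Ico_consecutive F (by omega : n ≤ 2*n) (by omega : 2*n ≤ 3*n),
    ← range_eq_Ico, Finset.sum_Ico_eq_sum_range, Finset.sum_Ico_eq_sum_range]
  have h1 : 2*n - n = n := by omega
  have h2 : 3*n - 2*n = n := by omega
  rw [h1, h2, add_assoc]

lemma hasDerivAt_term13 (ha : 4 * a * r ^ 2 < 1) (c : ℝ) (i j l : ℕ) :
    HasDerivAt (fun a' : ℝ => c * (t*r^2)^i * ((Real.sqrt (1 - 4 * a' * r ^ 2))⁻¹)^j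
        * ((1 + Real.sqrt (1 - 4 * a' * r ^ 2))⁻¹)^l)
      (r^2 * (2*(j:ℝ) * c * (t*r^2)^i * ((Real.sqrt (1 - 4 * a * r ^ 2))⁻¹)^(j+2)
          * ((1 + Real.sqrt (1 - 4 * a * r ^ 2))⁻¹)^l
        + 2*(l:ℝ) * c * (t*r^2)^i * ((Real.sqrt (1 - 4 * a * r ^ 2))⁻¹)^(j+1)
          * ((1 + Real.sqrt (1 - 4 * a * r ^ 2))⁻¹)^(l+1))) a := by
  have h := (((hasDerivAt_y13 ha).fun_pow j).const_mul (c * (t*r^2)^i)).fun_mul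
    ((hasDerivAt_z13 ha).fun_pow l)
  refine h.congr_deriv ?_
  set Y := (Real.sqrt (1 - 4 * a * r ^ 2))⁻¹
  set Z := (1 + Real.sqrt (1 - 4 * a * r ^ 2))⁻¹
  have hj : (j:ℝ) * Y ^ (j-1) * (2 * r ^ 2 * Y ^ 3) = 2 * r^2 * ((j:ℝ) * Y ^ (j+2)) := by
    cases j with
    | zero => simp
    | succ m => simp only [Nat.succ_sub_one]; push_cast; ring
  have hl : (l:ℝ) * Z ^ (l-1) * (2 * r ^ 2 * Y * Z ^ 2) = 2 * r^2 * ((l:ℝ) * Y * Z ^ (l+1)) := by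
    cases l with
    | zero => simp
    | succ m => simp only [Nat.succ_sub_one]; push_cast; ring
  rw [hj, hl]
  ring

lemma repr13 (k : ℕ) (hk : 1 ≤ k) :
    ∃ (n : ℕ) (c : ℕ → ℝ) (E1 E2 E3 : ℕ → ℕ),
      (∀ m, m < n → 1 ≤ E1 m ∧ E1 m ≤ k) ∧
      ∀ (r t a : ℝ), 0 < t → 4 * a * r ^ 2 < 1 →
        iteratedDeriv k
            (fun a' : ℝ => Real.exp (-(2 * t * r ^ 2) / (1 + Real.sqrt (1 - 4 * a' * r ^ 2)))) a
          = r ^ (2*k) * Real.exp (-(2 * t * r ^ 2) / (1 + Real.sqrt (1 - 4 * a * r ^ 2))) *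
            ∑ m ∈ Finset.range n, c m * (t * r ^ 2) ^ E1 m *
              ((Real.sqrt (1 - 4 * a * r ^ 2))⁻¹) ^ E2 m *
              ((1 + Real.sqrt (1 - 4 * a * r ^ 2))⁻¹) ^ E3 m := by
  induction k, hk using Nat.le_induction with
  | base =>
    refine ⟨1, fun _ => -4, fun _ => 1, fun _ => 1, fun _ => 2, fun m _ => ⟨le_refl 1, le_refl 1⟩,
      fun r t a ht ha => ?_⟩
    rw [iteratedDeriv_one, (hasDerivAt_g13 ha).deriv]
    simp only [Finset.sum_range_one]
    ring
  | succ k hk ih =>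
    obtain ⟨n, c, E1, E2, E3, hE, hrep⟩ := ih
    refine ⟨3*n,
      (fun m => if m < n then (-4) * c m else if m < 2*n then 2*(E2 (m-n) : ℝ) * c (m-n)
        else 2*(E3 (m-2*n) : ℝ) * c (m-2*n)),
      (fun m => if m < n then E1 m + 1 else if m < 2*n then E1 (m-n) else E1 (m-2*n)),
      (fun m => if m < n then E2 m + 1 else if m < 2*n then E2 (m-n) + 2 else E2 (m-2*n) + 1),
      (fun m => if m < n then E3 m + 2 else if m < 2*n then E3 (m-n) else E3 (m-2*n) + 1),
      ?_, ?_⟩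
    · intro m hm
      simp only []
      split_ifs with h1 h2
      · have := hE m h1; omega
      · have := hE (m-n) (by omega); omega
      · have := hE (m-2*n) (by omega); omega
    intro r t a ht ha
    have hU : IsOpen {x : ℝ | 4 * x * r ^ 2 < 1} :=
      isOpen_lt (by fun_prop) continuous_const
    have heq : iteratedDeriv k
        (fun a' : ℝ => Real.exp (-(2 * t * r ^ 2) / (1 + Real.sqrt (1 - 4 * a' * r ^ 2))))
        =ᶠ[nhds a] (fun a' : ℝ =>
          r ^ (2*k) * Real.exp (-(2 * t * r ^ 2) / (1 + Real.sqrt (1 - 4 * a' * r ^ 2))) *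
            ∑ m ∈ Finset.range n, c m * (t * r ^ 2) ^ E1 m *
              ((Real.sqrt (1 - 4 * a' * r ^ 2))⁻¹) ^ E2 m *
              ((1 + Real.sqrt (1 - 4 * a' * r ^ 2))⁻¹) ^ E3 m) :=
      Filter.eventuallyEq_of_mem (hU.mem_nhds ha) (fun x hx => hrep r t x ht hx)
    rw [iteratedDeriv_succ, heq.deriv_eq]
    have hS : HasDerivAt (fun a' : ℝ =>
        ∑ m ∈ Finset.range n, c m * (t * r ^ 2) ^ E1 m *
          ((Real.sqrt (1 - 4 * a' * r ^ 2))⁻¹) ^ E2 m *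
          ((1 + Real.sqrt (1 - 4 * a' * r ^ 2))⁻¹) ^ E3 m)
        (∑ m ∈ Finset.range n,
          r^2 * (2*(E2 m:ℝ) * c m * (t*r^2)^ E1 m
              * ((Real.sqrt (1 - 4 * a * r ^ 2))⁻¹)^(E2 m + 2)
              * ((1 + Real.sqrt (1 - 4 * a * r ^ 2))⁻¹)^ E3 m
            + 2*(E3 m:ℝ) * c m * (t*r^2)^ E1 m
              * ((Real.sqrt (1 - 4 * a * r ^ 2))⁻¹)^(E2 m + 1)
              * ((1 + Real.sqrt (1 - 4 * a * r ^ 2))⁻¹)^(E3 m + 1))) a :=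
      HasDerivAt.fun_sum (fun m _ => hasDerivAt_term13 (t := t) ha (c m) (E1 m) (E2 m) (E3 m))
    have hEd := ((hasDerivAt_g13 (t := t) ha).const_mul (r ^ (2*k))).fun_mul hS
    rw [hEd.deriv]
    -- now pure algebra
    set Y := (Real.sqrt (1 - 4 * a * r ^ 2))⁻¹ with hY
    set Z := (1 + Real.sqrt (1 - 4 * a * r ^ 2))⁻¹ with hZ
    set G := Real.exp (-(2 * t * r ^ 2) / (1 + Real.sqrt (1 - 4 * a * r ^ 2))) with hG
    rw [sum_three13 n (fun m => (if m < n then (-4) * c m else if m < 2*n then 2*(E2 (m-n) : ℝ) * c (m-n)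
        else 2*(E3 (m-2*n) : ℝ) * c (m-2*n)) * (t * r ^ 2) ^ (if m < n then E1 m + 1 else if m < 2*n then E1 (m-n) else E1 (m-2*n)) *
        Y ^ (if m < n then E2 m + 1 else if m < 2*n then E2 (m-n) + 2 else E2 (m-2*n) + 1) *
        Z ^ (if m < n then E3 m + 2 else if m < 2*n then E3 (m-n) else E3 (m-2*n) + 1))]
    have e1 : ∀ m ∈ Finset.range n, (if m < n then (-4) * c m else if m < 2*n then 2*(E2 (m-n) : ℝ) * c (m-n)
        else 2*(E3 (m-2*n) : ℝ) * c (m-2*n)) * (t * r ^ 2) ^ (if m < n then E1 m + 1 else if m < 2*n then E1 (m-n) else E1 (m-2*n)) *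
        Y ^ (if m < n then E2 m + 1 else if m < 2*n then E2 (m-n) + 2 else E2 (m-2*n) + 1) *
        Z ^ (if m < n then E3 m + 2 else if m < 2*n then E3 (m-n) else E3 (m-2*n) + 1)
        = (-4) * c m * (t * r ^ 2) ^ (E1 m + 1) * Y ^ (E2 m + 1) * Z ^ (E3 m + 2) := by
      intro m hm
      have h1 : m < n := Finset.mem_range.mp hm
      simp only [if_pos h1]
    have e2 : ∀ m ∈ Finset.range n, (if n + m < n then (-4) * c (n+m) else if n + m < 2*n then 2*(E2 (n+m-n) : ℝ) * c (n+m-n)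
        else 2*(E3 (n+m-2*n) : ℝ) * c (n+m-2*n)) * (t * r ^ 2) ^ (if n + m < n then E1 (n+m) + 1 else if n + m < 2*n then E1 (n+m-n) else E1 (n+m-2*n)) *
        Y ^ (if n + m < n then E2 (n+m) + 1 else if n + m < 2*n then E2 (n+m-n) + 2 else E2 (n+m-2*n) + 1) *
        Z ^ (if n + m < n then E3 (n+m) + 2 else if n + m < 2*n then E3 (n+m-n) else E3 (n+m-2*n) + 1)
        = 2*(E2 m:ℝ) * c m * (t * r ^ 2) ^ (E1 m) * Y ^ (E2 m + 2) * Z ^ (E3 m) := by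
      intro m hm
      have h1 : m < n := Finset.mem_range.mp hm
      have h2 : ¬ (n + m < n) := by omega
      have h3 : n + m < 2*n := by omega
      have h4 : n + m - n = m := by omega
      simp only [if_neg h2, if_pos h3, h4]
    have e3 : ∀ m ∈ Finset.range n, (if 2*n + m < n then (-4) * c (2*n+m) else if 2*n + m < 2*n then 2*(E2 (2*n+m-n) : ℝ) * c (2*n+m-n)
        else 2*(E3 (2*n+m-2*n) : ℝ) * c (2*n+m-2*n)) * (t * r ^ 2) ^ (if 2*n + m < n then E1 (2*n+m) + 1 else if 2*n + m < 2*n then E1 (2*n+m-n) else E1 (2*n+m-2*n)) *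
        Y ^ (if 2*n + m < n then E2 (2*n+m) + 1 else if 2*n + m < 2*n then E2 (2*n+m-n) + 2 else E2 (2*n+m-2*n) + 1) *
        Z ^ (if 2*n + m < n then E3 (2*n+m) + 2 else if 2*n + m < 2*n then E3 (2*n+m-n) else E3 (2*n+m-2*n) + 1)
        = 2*(E3 m:ℝ) * c m * (t * r ^ 2) ^ (E1 m) * Y ^ (E2 m + 1) * Z ^ (E3 m + 1) := by
      intro m hm
      have h1 : m < n := Finset.mem_range.mp hm
      have h2 : ¬ (2*n + m < n) := by omega
      have h3 : ¬ (2*n + m < 2*n) := by omega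
      have h4 : 2*n + m - 2*n = m := by omega
      simp only [if_neg h2, if_neg h3, h4]
    rw [Finset.sum_congr rfl e1, Finset.sum_congr rfl e2, Finset.sum_congr rfl e3,
      Finset.mul_sum, Finset.mul_sum, mul_add, mul_add, Finset.mul_sum, Finset.mul_sum,
      Finset.mul_sum, ← Finset.sum_add_distrib, ← Finset.sum_add_distrib,
      ← Finset.sum_add_distrib]
    refine Finset.sum_congr rfl fun m _ => ?_
    push_cast
    ring

/-- Estimates and exact form of the `k`-th derivative in `a` of
`a ↦ g(r,a,t) = exp(−2tr²/(1+√(1−4ar²)))`. -/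
theorem stmt_13 (k : ℕ) (hk : 1 ≤ k) :
    (∃ C : ℝ, 0 < C ∧ ∀ r ∈ Set.Icc (0:ℝ) (1/3), ∀ a ∈ Set.Icc (0:ℝ) 1, ∀ t : ℝ, 0 < t →
      |iteratedDeriv k
          (fun a' : ℝ => Real.exp (-(2 * t * r ^ 2) / (1 + Real.sqrt (1 - 4 * a' * r ^ 2)))) a|
        ≤ C * r ^ (2 * k) * Real.exp (-t * r ^ 2) * ∑ j ∈ Finset.Icc 1 k, (t * r ^ 2) ^ j) ∧
    (∃ c : ℕ → ℝ, ∀ r : ℝ, 0 ≤ r → ∀ t : ℝ, 0 < t →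
      iteratedDeriv k
          (fun a' : ℝ => Real.exp (-(2 * t * r ^ 2) / (1 + Real.sqrt (1 - 4 * a' * r ^ 2)))) 0
        = r ^ (2 * k) * Real.exp (-t * r ^ 2) * ∑ j ∈ Finset.Icc 1 k, c j * (t * r ^ 2) ^ j) := by
  obtain ⟨n, c, E1, E2, E3, hE, hrep⟩ := repr13 k hk
  constructor
  · refine ⟨(∑ m ∈ Finset.range n, |c m| * 2 ^ E2 m) + 1, by positivity, ?_⟩
    rintro r ⟨hr0, hr3⟩ a ⟨ha0, ha1⟩ t ht
    have ha : 4 * a * r ^ 2 < 1 := by nlinarith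
    rw [hrep r t a ht ha]
    have hs0 : 0 < Real.sqrt (1 - 4 * a * r ^ 2) := s_pos13 ha
    set s := Real.sqrt (1 - 4 * a * r ^ 2) with hs
    have hs1 : s ≤ 1 := by
      rw [hs]; exact Real.sqrt_le_one.mpr (by nlinarith)
    have hshalf : 1/2 ≤ s := by
      rw [hs, show (1:ℝ)/2 = Real.sqrt ((1:ℝ)/4) by
        rw [show (1:ℝ)/4 = (1/2)^2 by norm_num, Real.sqrt_sq (by norm_num)]]
      exact Real.sqrt_le_sqrt (by nlinarith)
    have hy2 : s⁻¹ ≤ 2 := by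
      rw [show (2:ℝ) = ((1:ℝ)/2)⁻¹ by norm_num]
      exact inv_anti₀ (by norm_num) hshalf
    have hz1 : (1 + s)⁻¹ ≤ 1 := inv_le_one_of_one_le₀ (by linarith)
    have hw : (0:ℝ) ≤ t * r ^ 2 := by positivity
    have hT0 : (0:ℝ) ≤ ∑ j ∈ Finset.Icc 1 k, (t * r ^ 2) ^ j :=
      Finset.sum_nonneg fun j _ => pow_nonneg hw j
    have hSbound : |∑ m ∈ Finset.range n, c m * (t * r ^ 2) ^ E1 m * (s⁻¹) ^ E2 m
          * ((1 + s)⁻¹) ^ E3 m|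
        ≤ (∑ m ∈ Finset.range n, |c m| * 2 ^ E2 m) * ∑ j ∈ Finset.Icc 1 k, (t * r ^ 2) ^ j := by
      calc |∑ m ∈ Finset.range n, c m * (t * r ^ 2) ^ E1 m * (s⁻¹) ^ E2 m * ((1 + s)⁻¹) ^ E3 m|
          ≤ ∑ m ∈ Finset.range n,
              |c m * (t * r ^ 2) ^ E1 m * (s⁻¹) ^ E2 m * ((1 + s)⁻¹) ^ E3 m| :=
            Finset.abs_sum_le_sum_abs _ _
        _ ≤ ∑ m ∈ Finset.range n,
              |c m| * 2 ^ E2 m * ∑ j ∈ Finset.Icc 1 k, (t * r ^ 2) ^ j := by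
            refine Finset.sum_le_sum fun m hm => ?_
            have hmem : E1 m ∈ Finset.Icc 1 k :=
              Finset.mem_Icc.mpr ⟨(hE m (Finset.mem_range.mp hm)).1,
                (hE m (Finset.mem_range.mp hm)).2⟩
            have h1 : |c m * (t * r ^ 2) ^ E1 m * (s⁻¹) ^ E2 m * ((1 + s)⁻¹) ^ E3 m|
                = |c m| * (t * r ^ 2) ^ E1 m * (s⁻¹) ^ E2 m * ((1 + s)⁻¹) ^ E3 m := by
              have hy0 : (0:ℝ) ≤ s⁻¹ := by positivity
              have hz0 : (0:ℝ) ≤ (1 + s)⁻¹ := by positivity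
              rw [abs_mul, abs_mul, abs_mul, abs_of_nonneg (pow_nonneg hw (E1 m)),
                abs_of_nonneg (pow_nonneg hy0 (E2 m)),
                abs_of_nonneg (pow_nonneg hz0 (E3 m))]
            rw [h1]
            calc |c m| * (t * r ^ 2) ^ E1 m * (s⁻¹) ^ E2 m * ((1 + s)⁻¹) ^ E3 m
                ≤ |c m| * (∑ j ∈ Finset.Icc 1 k, (t * r ^ 2) ^ j) * 2 ^ E2 m * 1 := by
                  gcongr
                  · exact Finset.single_le_sum (fun j _ => pow_nonneg hw j) hmem
                  · exact pow_le_one₀ (by positivity) hz1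
              _ = |c m| * 2 ^ E2 m * ∑ j ∈ Finset.Icc 1 k, (t * r ^ 2) ^ j := by ring
        _ = (∑ m ∈ Finset.range n, |c m| * 2 ^ E2 m) * ∑ j ∈ Finset.Icc 1 k, (t * r ^ 2) ^ j := by
            rw [← Finset.sum_mul]
    have hgle : Real.exp (-(2 * t * r ^ 2) / (1 + s)) ≤ Real.exp (-t * r ^ 2) := by
      rw [Real.exp_le_exp]
      have hp : (0:ℝ) < 1 + s := by linarith
      rw [div_le_iff₀ hp]
      nlinarith [mul_nonneg (mul_nonneg ht.le (sq_nonneg r)) (sub_nonneg.mpr hs1)]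
    rw [abs_mul, abs_mul, abs_of_nonneg (pow_nonneg hr0 (2*k)),
      abs_of_pos (Real.exp_pos _)]
    calc r ^ (2*k) * Real.exp (-(2 * t * r ^ 2) / (1 + s)) *
          |∑ m ∈ Finset.range n, c m * (t * r ^ 2) ^ E1 m * (s⁻¹) ^ E2 m * ((1 + s)⁻¹) ^ E3 m|
        ≤ r ^ (2*k) * Real.exp (-t * r ^ 2) *
          ((∑ m ∈ Finset.range n, |c m| * 2 ^ E2 m) * ∑ j ∈ Finset.Icc 1 k, (t * r ^ 2) ^ j) :=
          mul_le_mul (mul_le_mul_of_nonneg_left hgle (pow_nonneg hr0 (2*k))) hSbound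
            (abs_nonneg _) (by positivity)
      _ ≤ r ^ (2*k) * Real.exp (-t * r ^ 2) *
          (((∑ m ∈ Finset.range n, |c m| * 2 ^ E2 m) + 1) * ∑ j ∈ Finset.Icc 1 k, (t * r ^ 2) ^ j) :=
          mul_le_mul_of_nonneg_left (mul_le_mul_of_nonneg_right
            (by linarith [Finset.sum_nonneg (fun m (_ : m ∈ Finset.range n) =>
              mul_nonneg (abs_nonneg (c m)) (pow_nonneg (by norm_num : (0:ℝ) ≤ 2) (E2 m)))])
            hT0) (by positivity)
      _ = ((∑ m ∈ Finset.range n, |c m| * 2 ^ E2 m) + 1) * r ^ (2*k) * Real.exp (-t * r ^ 2) *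
          ∑ j ∈ Finset.Icc 1 k, (t * r ^ 2) ^ j := by ring
  · refine ⟨fun j => ∑ m ∈ Finset.range n,
      if E1 m = j then c m * ((2:ℝ)⁻¹) ^ E3 m else 0, ?_⟩
    intro r hr t ht
    have ha : 4 * (0:ℝ) * r ^ 2 < 1 := by norm_num
    rw [hrep r t 0 ht ha]
    have h1 : (1:ℝ) - 4 * 0 * r ^ 2 = 1 := by norm_num
    rw [h1, Real.sqrt_one]
    have h2 : -(2 * t * r ^ 2) / (1 + 1) = -t * r ^ 2 := by ring
    rw [h2]
    congr 1
    have h3 : ∀ m ∈ Finset.range n,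
        c m * (t * r ^ 2) ^ E1 m * ((1:ℝ)⁻¹) ^ E2 m * (((1:ℝ) + 1)⁻¹) ^ E3 m
          = c m * ((2:ℝ)⁻¹) ^ E3 m * (t * r ^ 2) ^ E1 m := by
      intro m _
      norm_num
      ring
    rw [Finset.sum_congr rfl h3]
    simp_rw [Finset.sum_mul, ite_mul, zero_mul]
    rw [Finset.sum_comm]
    refine Finset.sum_congr rfl fun m hm => ?_
    rw [Finset.sum_ite_eq (Finset.Icc 1 k) (E1 m)
      (fun j => c m * (2:ℝ)⁻¹ ^ E3 m * (t * r ^ 2) ^ j),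
      if_pos (Finset.mem_Icc.mpr ⟨(hE m (Finset.mem_range.mp hm)).1,
        (hE m (Finset.mem_range.mp hm)).2⟩)]
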